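/- Let R be an associative ring with identity and N a nilpotent ideal of R of nilpotency index t ≥ 2. Suppose s > 1 is a natural number such that s·n = 0 for all n ∈ N and every prime factor of s is greater than or equal to t. If f ∈ R is such that f + N is a unit of R/N and g ∈ R satisfies (f + N)(g + N) = 1 + N, then f is a unit of R, (f·g)^s = 1, and f^{-1} = g·(f·g)^{s-1}. -/

import Mathlib

private lemma choose_dvd_aux {s k t : ℕ} (hs : 1 ≤ s) (hk1 : 1 ≤ k) (hkt : k < t)
    (hfac : ∀ p : ℕ, p.Prime → p ∣ s → t ≤ p) : s ∣ s.choose k := by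
  have hcop : Nat.Coprime s k := by
    rw [Nat.coprime_iff_gcd_eq_one]
    by_contra h
    have hp := Nat.minFac_prime h
    have hps : (Nat.gcd s k).minFac ∣ s :=
      ((Nat.gcd s k).minFac_dvd).trans (Nat.gcd_dvd_left s k)
    have hpk : (Nat.gcd s k).minFac ∣ k :=
      ((Nat.gcd s k).minFac_dvd).trans (Nat.gcd_dvd_right s k)
    have h1 := hfac _ hp hps
    have h2 : (Nat.gcd s k).minFac ≤ k := Nat.le_of_dvd (by omega) hpk
    omega
  have key : s * (s - 1).choose (k - 1) = s.choose k * k := by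
    have := Nat.add_one_mul_choose_eq (s - 1) (k - 1)
    have e1 : s - 1 + 1 = s := by omega
    have e2 : k - 1 + 1 = k := by omega
    rw [e1, e2] at this
    exact this
  exact hcop.dvd_of_dvd_mul_right ⟨_, key.symm⟩

private lemma one_sub_pow_eq_one {R : Type*} [Ring R] (N : TwoSidedIdeal R) (t : ℕ)
    (ht : 2 ≤ t)
    (hNt : ∀ l : List R, l.length = t → (∀ x ∈ l, x ∈ N) → l.prod = 0)
    (s : ℕ) (hs : 1 < s) (hsN : ∀ n ∈ N, s • n = 0)
    (hfac : ∀ p : ℕ, p.Prime → p ∣ s → t ≤ p)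
    (n : R) (hn : n ∈ N) : (1 - n) ^ s = 1 := by
  -- powers of elements of N with exponent ≥ 1 lie in N
  have hpow_mem : ∀ (m : R), m ∈ N → ∀ k : ℕ, 1 ≤ k → m ^ k ∈ N := by
    intro m hm k hk
    induction k with
    | zero => omega
    | succ j ih =>
      rcases Nat.eq_or_lt_of_le hk with h | h
      · simpa [← h] using hm
      · rw [pow_succ]
        exact N.mul_mem_right _ _ (ih (by omega))
  -- t-th powers of elements of N vanish
  have hpow_zero : ∀ (m : R), m ∈ N → m ^ t = 0 := by
    intro m hm
    have := hNt (List.replicate t m) (by simp) (by intro x hx; simp_all)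
    simpa [List.prod_replicate] using this
  have hneg : -n ∈ N := N.neg_mem hn
  have comm : Commute (-n) (1 : R) := Commute.one_right _
  have expand := comm.add_pow s
  rw [sub_eq_neg_add]
  rw [expand]
  rw [Finset.sum_eq_single 0]
  · simp
  · intro k hk hk0
    simp only [one_pow, mul_one]
    rcases lt_or_ge k t with hkt | hkt
    · -- 1 ≤ k < t : use divisibility of binomial coefficient
      obtain ⟨m, hm⟩ := choose_dvd_aux (by omega) (by omega) hkt hfac
      rw [hm, mul_comm s m]
      have hcast : (-n) ^ k * ((m * s : ℕ) : R) = (m * s) • ((-n) ^ k) := by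
        rw [nsmul_eq_mul, (Nat.cast_commute (m * s) ((-n) ^ k)).eq]
      rw [hcast, mul_smul]
      rw [hsN _ (hpow_mem _ hneg k (by omega))]
      simp
    · -- k ≥ t : the power vanishes
      have : (-n) ^ k = 0 := by
        have : (-n) ^ k = (-n) ^ t * (-n) ^ (k - t) := by
          rw [← pow_add]; congr 1; omega
        rw [this, hpow_zero _ hneg, zero_mul]
      rw [this, zero_mul]
  · intro h; simp at h

/-- Let `R` be an associative ring with identity and `N` a
nilpotent two-sided ideal of `R` of nilpotency index `t ≥ 2`.  Suppose `s > 1`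
is a natural number such that `s • n = 0` for all `n ∈ N` and every prime factor
of `s` is at least `t`.  If `f + N` is a unit of `R/N` and `g ∈ R` satisfies
`(f + N)(g + N) = 1 + N`, then `f` is a unit of `R`, `(f*g)^s = 1`, and
`f⁻¹ = g * (f*g)^(s-1)`. -/
theorem unit_lift_inverse_formula {R : Type*} [Ring R] (N : TwoSidedIdeal R) (t : ℕ)
    (ht : 2 ≤ t)
    (hNt : ∀ l : List R, l.length = t → (∀ x ∈ l, x ∈ N) → l.prod = 0)
    (hNt' : ∃ l : List R, l.length = t - 1 ∧ (∀ x ∈ l, x ∈ N) ∧ l.prod ≠ 0)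
    (s : ℕ) (hs : 1 < s) (hsN : ∀ n ∈ N, s • n = 0)
    (hfac : ∀ p : ℕ, p.Prime → p ∣ s → t ≤ p)
    (f g : R) (hf : IsUnit (N.ringCon.mk' f))
    (hfg : N.ringCon.mk' f * N.ringCon.mk' g = 1) :
    IsUnit f ∧ (f * g) ^ s = 1 ∧
      f * (g * (f * g) ^ (s - 1)) = 1 ∧ (g * (f * g) ^ (s - 1)) * f = 1 := by
  -- from the quotient relation: f*g - 1 ∈ N
  have hfg' : f * g - 1 ∈ N := by
    rw [← N.rel_iff]
    have : N.ringCon.mk' (f * g) = N.ringCon.mk' 1 := by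
      rw [map_mul, map_one, hfg]
    exact N.ringCon.eq.mp this
  -- g is also a left inverse mod N
  have hgf : N.ringCon.mk' g * N.ringCon.mk' f = 1 := by
    obtain ⟨u, hu⟩ := hf
    have h3 : (↑u⁻¹ : N.ringCon.Quotient) = N.ringCon.mk' g :=
      Units.inv_eq_of_mul_eq_one_right (by rw [hu]; exact hfg)
    rw [← h3, ← hu]
    exact u.inv_mul
  have hgf' : g * f - 1 ∈ N := by
    rw [← N.rel_iff]
    have : N.ringCon.mk' (g * f) = N.ringCon.mk' 1 := by
      rw [map_mul, map_one, hgf]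
    exact N.ringCon.eq.mp this
  -- (f*g)^s = 1 and (g*f)^s = 1
  have h1 : (f * g) ^ s = 1 := by
    rw [← sub_sub_cancel 1 (f * g)]
    exact one_sub_pow_eq_one N t ht hNt s hs hsN hfac _ (by simpa using N.neg_mem hfg')
  have h2 : (g * f) ^ s = 1 := by
    rw [← sub_sub_cancel 1 (g * f)]
    exact one_sub_pow_eq_one N t ht hNt s hs hsN hfac _ (by simpa using N.neg_mem hgf')
  -- right inverse of f
  have hra : f * (g * (f * g) ^ (s - 1)) = 1 := by
    rw [← mul_assoc, ← pow_succ']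
    rw [show s - 1 + 1 = s by omega]
    exact h1
  -- left inverse of f
  have hlb : ((g * f) ^ (s - 1) * g) * f = 1 := by
    rw [mul_assoc, ← pow_succ]
    rw [show s - 1 + 1 = s by omega]
    exact h2
  -- left and right inverses coincide
  have hab : (g * f) ^ (s - 1) * g = g * (f * g) ^ (s - 1) := by
    calc (g * f) ^ (s - 1) * g
        = ((g * f) ^ (s - 1) * g) * (f * (g * (f * g) ^ (s - 1))) := by rw [hra, mul_one]
      _ = (((g * f) ^ (s - 1) * g) * f) * (g * (f * g) ^ (s - 1)) := by
          simp [mul_assoc]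
      _ = g * (f * g) ^ (s - 1) := by rw [hlb, one_mul]
  have hla : (g * (f * g) ^ (s - 1)) * f = 1 := by rw [← hab]; exact hlb
  exact ⟨⟨⟨f, g * (f * g) ^ (s - 1), hra, hla⟩, rfl⟩, h1, hra, hla⟩
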